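/- Let d ≥ 1, r > 0, and η ∈ (0, r/3). Let μ₀, μ₁, ν₀, ν₁ be Borel probability measures on ℝ^d, where ν₀ and ν₁ play the role of the empirical approximations of μ₀ and μ₁ respectively. Then the adversarial transport cost D satisfies both: D_{r+2η}(μ₀, μ₁) ≤ D_r(ν₀, ν₁) + D_η(μ₀, ν₀) + D_η(μ₁, ν₁), and D_{r−2η}(μ₀, μ₁) ≥ D_r(ν₀, ν₁) − D_η(μ₀, ν₀) − D_η(μ₁, ν₁). -/

import Mathlib

open MeasureTheory Set Filter ProbabilityTheory
open scoped ENNReal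

/-- The adversarial optimal transport cost
`D_s(μ, ν) = inf_π π{(x, y) : ‖x − y‖₂ > 2s}`, the infimum running over all couplings
`π` of `μ` and `ν`. -/
noncomputable def advCost {d : ℕ} (s : ℝ)
    (μ ν : Measure (EuclideanSpace ℝ (Fin d))) : ℝ≥0∞ :=
  ⨅ (π : Measure (EuclideanSpace ℝ (Fin d) × EuclideanSpace ℝ (Fin d)))
    (_ : π.map Prod.fst = μ) (_ : π.map Prod.snd = ν),
    π {p | 2 * s < dist p.1 p.2}

section AuxAdvCost

variable {d : ℕ}
local notation "E" => EuclideanSpace ℝ (Fin d)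

lemma hSmeas (s : ℝ) : MeasurableSet {p : E × E | 2 * s < dist p.1 p.2} :=
  measurableSet_lt measurable_const (continuous_fst.dist continuous_snd).measurable

lemma advCost_le_coupling (s : ℝ) (μ ν : Measure E) (π : Measure (E × E))
    (h1 : π.map Prod.fst = μ) (h2 : π.map Prod.snd = ν) :
    advCost s μ ν ≤ π {p | 2 * s < dist p.1 p.2} :=
  iInf_le_of_le π (iInf_le_of_le h1 (iInf_le_of_le h2 le_rfl))

lemma advCost_symm_le (s : ℝ) (μ ν : Measure E) : advCost s ν μ ≤ advCost s μ ν := by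
  refine le_iInf fun π => le_iInf fun h1 => le_iInf fun h2 => ?_
  have m1 : (π.map Prod.swap).map Prod.fst = ν := by
    rw [Measure.map_map measurable_fst measurable_swap]; exact h2
  have m2 : (π.map Prod.swap).map Prod.snd = μ := by
    rw [Measure.map_map measurable_snd measurable_swap]; exact h1
  refine (advCost_le_coupling s ν μ _ m1 m2).trans_eq ?_
  rw [Measure.map_apply measurable_swap (hSmeas s)]
  congr 1
  ext p
  simp [dist_comm]

lemma advCost_symm (s : ℝ) (μ ν : Measure E) : advCost s μ ν = advCost s ν μ :=
  le_antisymm (advCost_symm_le s ν μ) (advCost_symm_le s μ ν)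

lemma advCost_triangle (s t : ℝ) (μ ν ρ : Measure E) [IsProbabilityMeasure ν] :
    advCost (s + t) μ ρ ≤ advCost s μ ν + advCost t ν ρ := by
  conv_rhs => rw [advCost, advCost]
  simp_rw [ENNReal.iInf_add, ENNReal.add_iInf]
  refine le_iInf fun π₁ => le_iInf fun h11 => le_iInf fun h12 =>
    le_iInf fun π₂ => le_iInf fun h21 => le_iInf fun h22 => ?_
  -- π₁ couples μ, ν; π₂ couples ν, ρ. Glue along ν.
  haveI : IsProbabilityMeasure π₁ := ⟨by
    rw [← preimage_univ (f := @Prod.snd E E), ← Measure.map_apply measurable_snd .univ, h12]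
    exact measure_univ⟩
  haveI : IsProbabilityMeasure π₂ := ⟨by
    rw [← preimage_univ (f := @Prod.fst E E), ← Measure.map_apply measurable_fst .univ, h21]
    exact measure_univ⟩
  set κ : Kernel (E × E) E := π₂.condKernel.comap Prod.snd measurable_snd with hκ
  haveI : IsMarkovKernel κ := by rw [hκ]; infer_instance
  set τ : Measure ((E × E) × E) := π₁ ⊗ₘ κ with hτ
  have hm23 : Measurable (fun q : (E × E) × E => (q.1.2, q.2)) := by fun_prop
  have hfstτ : τ.map Prod.fst = π₁ := Measure.fst_compProd π₁ κ
  -- the (2,3)-marginal of τ is π₂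
  have key : τ.map (fun q => (q.1.2, q.2)) = π₂ := by
    ext u hu
    rw [Measure.map_apply hm23 hu, hτ, Measure.compProd_apply (hm23 hu)]
    have hstep : ∀ x : E × E,
        κ x (Prod.mk x ⁻¹' ((fun q : (E × E) × E => (q.1.2, q.2)) ⁻¹' u))
        = π₂.condKernel x.2 (Prod.mk x.2 ⁻¹' u) := fun x => rfl
    simp_rw [hstep]
    rw [← lintegral_map (Kernel.measurable_kernel_prodMk_left hu) measurable_snd, h12]
    have h2 := Measure.compProd_apply (μ := π₂.fst) (κ := π₂.condKernel) hu
    rw [Measure.disintegrate π₂ π₂.condKernel] at h2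
    rw [h2, show π₂.fst = ν from h21]
  set f : (E × E) × E → E × E := fun q => (q.1.1, q.2) with hf
  have hfm : Measurable f := by rw [hf]; fun_prop
  set π : Measure (E × E) := τ.map f with hπ
  have hm1 : π.map Prod.fst = μ := by
    have : π.map Prod.fst = π₁.map Prod.fst := by
      rw [← hfstτ, hπ, Measure.map_map measurable_fst hfm,
        Measure.map_map measurable_fst measurable_fst]
      rfl
    rw [this, h11]
  have hm2 : π.map Prod.snd = ρ := by
    have : π.map Prod.snd = π₂.map Prod.snd := by
      rw [← key, hπ, Measure.map_map measurable_snd hfm, Measure.map_map measurable_snd hm23]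
      rfl
    rw [this, h22]
  refine (advCost_le_coupling _ μ ρ π hm1 hm2).trans ?_
  rw [hπ, Measure.map_apply hfm (hSmeas _)]
  have hsub : f ⁻¹' {p : E × E | 2 * (s + t) < dist p.1 p.2} ⊆
      (Prod.fst ⁻¹' {p : E × E | 2 * s < dist p.1 p.2}) ∪
      ((fun q : (E × E) × E => (q.1.2, q.2)) ⁻¹' {p : E × E | 2 * t < dist p.1 p.2}) := by
    rintro ⟨⟨a, b⟩, c⟩ h
    simp only [mem_preimage, mem_setOf_eq, mem_union, hf] at h ⊢
    by_contra hc
    push_neg at hc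
    have := dist_triangle a b c
    linarith [hc.1, hc.2]
  refine (measure_mono hsub).trans ((measure_union_le _ _).trans ?_)
  gcongr
  · rw [← Measure.map_apply measurable_fst (hSmeas s), hfstτ]
  · rw [← Measure.map_apply hm23 (hSmeas t), key]


end AuxAdvCost

/-- For `d ≥ 1`, `r > 0`, `η ∈ (0, r/3)` and Borel probability measures
`μ₀, μ₁, ν₀, ν₁` on `ℝ^d`:
`D_{r+2η}(μ₀, μ₁) ≤ D_r(ν₀, ν₁) + D_η(μ₀, ν₀) + D_η(μ₁, ν₁)` and
`D_{r−2η}(μ₀, μ₁) ≥ D_r(ν₀, ν₁) − D_η(μ₀, ν₀) − D_η(μ₁, ν₁)`. -/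
theorem advCost_triangle_bounds
    (d : ℕ) (hd : 1 ≤ d) (r η : ℝ) (hr : 0 < r) (hη : 0 < η) (hηr : η < r / 3)
    (μ₀ μ₁ ν₀ ν₁ : Measure (EuclideanSpace ℝ (Fin d)))
    [IsProbabilityMeasure μ₀] [IsProbabilityMeasure μ₁]
    [IsProbabilityMeasure ν₀] [IsProbabilityMeasure ν₁] :
    advCost (r + 2 * η) μ₀ μ₁ ≤ advCost r ν₀ ν₁ + advCost η μ₀ ν₀ + advCost η μ₁ ν₁ ∧
    advCost r ν₀ ν₁ - advCost η μ₀ ν₀ - advCost η μ₁ ν₁ ≤ advCost (r - 2 * η) μ₀ μ₁ := by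
  constructor
  · have h1 : advCost (r + 2 * η) μ₀ μ₁ ≤ advCost η μ₀ ν₀ + advCost (r + η) ν₀ μ₁ := by
      have := advCost_triangle η (r + η) μ₀ ν₀ μ₁
      rwa [show η + (r + η) = r + 2 * η by ring] at this
    have h2 : advCost (r + η) ν₀ μ₁ ≤ advCost r ν₀ ν₁ + advCost η ν₁ μ₁ :=
      advCost_triangle r η ν₀ ν₁ μ₁
    rw [advCost_symm η ν₁ μ₁] at h2
    calc advCost (r + 2 * η) μ₀ μ₁
        ≤ advCost η μ₀ ν₀ + (advCost r ν₀ ν₁ + advCost η μ₁ ν₁) :=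
          h1.trans (add_le_add_right h2 _)
      _ = advCost r ν₀ ν₁ + advCost η μ₀ ν₀ + advCost η μ₁ ν₁ := by ring
  · have h1 : advCost r ν₀ ν₁ ≤ advCost η ν₀ μ₀ + advCost (r - η) μ₀ ν₁ := by
      have := advCost_triangle η (r - η) ν₀ μ₀ ν₁
      rwa [show η + (r - η) = r by ring] at this
    have h2 : advCost (r - η) μ₀ ν₁ ≤ advCost (r - 2 * η) μ₀ μ₁ + advCost η μ₁ ν₁ := by
      have := advCost_triangle (r - 2 * η) η μ₀ μ₁ ν₁
      rwa [show r - 2 * η + η = r - η by ring] at this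
    rw [advCost_symm η ν₀ μ₀] at h1
    rw [tsub_le_iff_right, tsub_le_iff_right]
    calc advCost r ν₀ ν₁
        ≤ advCost η μ₀ ν₀ + (advCost (r - 2 * η) μ₀ μ₁ + advCost η μ₁ ν₁) :=
          h1.trans (add_le_add_right h2 _)
      _ = advCost (r - 2 * η) μ₀ μ₁ + advCost η μ₁ ν₁ + advCost η μ₀ ν₀ := by ring
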